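/- arXiv:1208.4995 — 4 statements merged into one kernel-verified Lean document; each statement's English description precedes it below -/
import Mathlib

section
/- An edge e = (x',y)(x,y') of G × H lies in the complete bipartite subgraph K(u,v) if and only if (u,v) = (x,y) or (u,v) = (x',y'). -/
open SimpleGraph

/-- The direct (tensor) product of two simple graphs. -/
def tensorProd {α β : Type*} (G : SimpleGraph α) (H : SimpleGraph β) :
    SimpleGraph (α × β) where
  Adj p q := G.Adj p.1 q.1 ∧ H.Adj p.2 q.2
  symm := ⟨fun _ _ h => ⟨h.1.symm, h.2.symm⟩⟩
  loopless := ⟨fun p h => G.loopless.irrefl p.1 h.1⟩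

instance {α β : Type*} (G : SimpleGraph α) (H : SimpleGraph β)
    [DecidableRel G.Adj] [DecidableRel H.Adj] :
    DecidableRel (tensorProd G H).Adj :=
  fun _ _ => instDecidableAnd

/-- The edge connectivity of a graph: the least size of a set of edges whose
deletion disconnects the graph. -/
noncomputable def edgeConn {V : Type*} (G : SimpleGraph V) : ℕ :=
  sInf {n | ∃ S ⊆ G.edgeSet, ¬ (G.deleteEdges S).Connected ∧ S.ncard = n}

/-- The bipartite edge frustration: the least number of edges whose deletion
makes the graph bipartite. -/
noncomputable def frustration {V : Type*} (G : SimpleGraph V) : ℕ :=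
  sInf {n | ∃ S ⊆ G.edgeSet, ((G.deleteEdges S).Colorable 2) ∧ S.ncard = n}

/-- ρ(G) = min over partitions {A, Aᶜ} of V(G) with A nonempty of
2·φ(G[A]) + |[A, Aᶜ]|. -/
noncomputable def rho {V : Type*} (G : SimpleGraph V) : ℕ :=
  sInf {n | ∃ A : Set V, A.Nonempty ∧
    n = 2 * frustration (G.induce A) +
      {e ∈ G.edgeSet | ∃ a ∈ A, ∃ b ∉ A, e = s(a, b)}.ncard}

/-- ψ(G,H) = ρ(G)·|E(H)| + 2·φ(H)·|E(G)|. -/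
noncomputable def psi {α β : Type*} (G : SimpleGraph α) (H : SimpleGraph β) : ℕ :=
  rho G * H.edgeSet.ncard + 2 * frustration H * G.edgeSet.ncard

/-- The vertex set of the complete bipartite subgraph K(u,v) of G × H,
namely (N_G(u) × {v}) ∪ ({u} × N_H(v)). -/
def Kset {α β : Type*} (G : SimpleGraph α) (H : SimpleGraph β) (u : α) (v : β) :
    Set (α × β) :=
  {p | (p.1 ∈ G.neighborSet u ∧ p.2 = v) ∨ (p.1 = u ∧ p.2 ∈ H.neighborSet v)}

theorem edge_in_K_iff {α β : Type*} (G : SimpleGraph α) (H : SimpleGraph β)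
    (u x x' : α) (v y y' : β) (hG : G.Adj x x') (hH : H.Adj y y') :
    ((x', y) ∈ Kset G H u v ∧ (x, y') ∈ Kset G H u v) ↔
      ((u, v) = (x, y) ∨ (u, v) = (x', y')) := by
  simp only [Kset, Set.mem_setOf_eq, SimpleGraph.mem_neighborSet, Prod.mk.injEq]
  constructor
  · rintro ⟨ha | ⟨rfl, ha⟩, hb | ⟨rfl, hb⟩⟩
    · obtain ⟨_, rfl⟩ := ha
      exact absurd (hb.2 ▸ hH) (H.loopless.irrefl _)
    · obtain ⟨_, rfl⟩ := ha
      exact Or.inl ⟨rfl, rfl⟩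
    · obtain ⟨_, rfl⟩ := hb
      exact Or.inr ⟨rfl, rfl⟩
    · exact absurd hG (G.loopless.irrefl _)
  · rintro (⟨rfl, rfl⟩ | ⟨rfl, rfl⟩)
    · exact ⟨Or.inl ⟨hG, rfl⟩, Or.inr ⟨rfl, hH⟩⟩
    · exact ⟨Or.inr ⟨rfl, hH.symm⟩, Or.inl ⟨hG.symm, rfl⟩⟩
end

section
/- If both G and H are bipartite graphs each containing at least one edge, then the direct product G × H is disconnected. -/
open SimpleGraph

theorem tensor_of_bipartite_disconnected {α β : Type*} [Fintype α] [Fintype β]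
    (G : SimpleGraph α) (H : SimpleGraph β)
    (hG : G.Colorable 2) (hH : H.Colorable 2)
    (hGe : G.edgeSet.Nonempty) (hHe : H.edgeSet.Nonempty) :
    ¬ (tensorProd G H).Connected := by
  obtain ⟨c⟩ := hG
  obtain ⟨d⟩ := hH
  obtain ⟨e, he⟩ := hGe
  induction e using Sym2.ind with
  | _ u v =>
  rw [SimpleGraph.mem_edgeSet] at he
  obtain ⟨e', he'⟩ := hHe
  induction e' using Sym2.ind with
  | _ x y =>
  rw [SimpleGraph.mem_edgeSet] at he'
  intro hcon
  have hreach : (tensorProd G H).Reachable (u, x) (v, x) := hcon.preconnected _ _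
  have key : ∀ p q : α × β, (tensorProd G H).Reachable p q →
      ((c p.1 = d p.2) ↔ (c q.1 = d q.2)) := by
    intro p q hr
    obtain ⟨w⟩ := hr
    induction w with
    | nil => rfl
    | cons h _ ih =>
      refine Iff.trans ?_ ih
      have h1 : c _ ≠ c _ := c.valid h.1
      have h2 : d _ ≠ d _ := d.valid h.2
      rw [Fin.ne_iff_vne] at h1 h2
      constructor <;> intro hh <;> rw [Fin.ext_iff] at hh ⊢ <;> omega
  have := key (u, x) (v, x) hreach
  have h1 : c u ≠ c v := c.valid he
  simp only at this
  rw [Fin.ne_iff_vne] at h1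
  rw [Fin.ext_iff, Fin.ext_iff] at this
  omega
end

section
/- If S is a minimum edge-cut of G with components X and Y of G − S, then the set of edges of G × H with one endvertex in X × V(H) and the other in Y × V(H) is an edge-cut of G × H of size 2·λ(G)·|E(H)|, and the components of G × H minus this set restricted to each side are X × V(H) and Y × V(H) (in particular no edge of G × H joins X × V(H) to Y × V(H) other than these). -/
open SimpleGraph

lemma aux_side_inv {V : Type*} {G' : SimpleGraph V} {X Y : Set V}
    (hd : Disjoint X Y)
    (hE : ∀ u v, G'.Adj u v → ((u ∈ X ∧ v ∈ X) ∨ (u ∈ Y ∧ v ∈ Y))) :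
    ∀ {u v}, G'.Reachable u v → u ∈ X → v ∈ X := by
  intro u v h
  obtain ⟨w⟩ := h
  induction w with
  | nil => exact id
  | cons h p ih =>
    intro ha
    rcases hE _ _ h with ⟨_, h2⟩ | ⟨h1, _⟩
    · exact ih h2
    · exact absurd h1 (Set.disjoint_left.mp hd ha)

lemma aux_ncard_prod {A B : Type*} [Finite A] [Finite B] (s : Set A) (t : Set B) :
    (s ×ˢ t).ncard = s.ncard * t.ncard := by
  rw [← Nat.card_coe_set_eq, ← Nat.card_coe_set_eq, ← Nat.card_coe_set_eq,
    Nat.card_congr (Equiv.Set.prod s t), Nat.card_prod]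

lemma aux_darts {β : Type*} [Fintype β] (H : SimpleGraph β) :
    {p : β × β | H.Adj p.1 p.2}.ncard = 2 * H.edgeSet.ncard := by
  classical
  rw [← Nat.card_coe_set_eq]
  have e : H.Dart ≃ {p : β × β | H.Adj p.1 p.2} :=
    { toFun := fun d => ⟨d.toProd, d.adj⟩
      invFun := fun p => ⟨p.1, p.2⟩
      left_inv := fun d => rfl
      right_inv := fun p => rfl }
  rw [← Nat.card_congr e, Nat.card_eq_fintype_card, H.dart_card_eq_twice_card_edges,
    Set.ncard_eq_toFinset_card']
  exact congrArg _ (congrArg _ (by ext; simp))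

theorem preimage_of_min_cut_is_cut {α β : Type*} [Fintype α] [Fintype β]
    (G : SimpleGraph α) (H : SimpleGraph β) (hHe : H.edgeSet.Nonempty)
    (S : Set (Sym2 α)) (hSsub : S ⊆ G.edgeSet)
    (hSdisc : ¬ (G.deleteEdges S).Connected)
    (hSmin : S.ncard = edgeConn G)
    (X Y : Set α) (hXne : X.Nonempty) (hYne : Y.Nonempty)
    (hunion : X ∪ Y = Set.univ) (hdisj : Disjoint X Y)
    (hcomp : ∀ u v : α, (G.deleteEdges S).Reachable u v ↔
      ((u ∈ X ∧ v ∈ X) ∨ (u ∈ Y ∧ v ∈ Y))) :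
    {e ∈ (tensorProd G H).edgeSet |
        ∃ p q : α × β, e = s(p, q) ∧ p.1 ∈ X ∧ q.1 ∈ Y}.ncard =
      2 * edgeConn G * H.edgeSet.ncard ∧
    ¬ ((tensorProd G H).deleteEdges
        {e ∈ (tensorProd G H).edgeSet |
          ∃ p q : α × β, e = s(p, q) ∧ p.1 ∈ X ∧ q.1 ∈ Y}).Connected ∧
    (∀ p q : α × β, p.1 ∈ X → q.1 ∈ Y →
      ¬ ((tensorProd G H).deleteEdges
          {e ∈ (tensorProd G H).edgeSet |
            ∃ p q : α × β, e = s(p, q) ∧ p.1 ∈ X ∧ q.1 ∈ Y}).Adj p q) := by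
  classical
  set T : Set (Sym2 (α × β)) :=
    {e ∈ (tensorProd G H).edgeSet |
      ∃ p q : α × β, e = s(p, q) ∧ p.1 ∈ X ∧ q.1 ∈ Y} with hT
  -- T is symmetric-closed over crossing adjacencies
  have hTmem : ∀ p q : α × β, (tensorProd G H).Adj p q → p.1 ∈ X → q.1 ∈ Y →
      s(p, q) ∈ T := by
    intro p q hadj hp hq
    exact ⟨(tensorProd G H).mem_edgeSet.mpr hadj, p, q, rfl, hp, hq⟩
  -- Part 3
  have part3 : ∀ p q : α × β, p.1 ∈ X → q.1 ∈ Y →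
      ¬ ((tensorProd G H).deleteEdges T).Adj p q := by
    intro p q hp hq hadj
    rw [SimpleGraph.deleteEdges_adj] at hadj
    exact hadj.2 (hTmem p q hadj.1 hp hq)
  -- every edge of the deleted tensor graph stays on one side
  have hside : ∀ p q : α × β, ((tensorProd G H).deleteEdges T).Adj p q →
      ((p ∈ (X ×ˢ (Set.univ : Set β)) ∧ q ∈ (X ×ˢ (Set.univ : Set β))) ∨
       (p ∈ (Y ×ˢ (Set.univ : Set β)) ∧ q ∈ (Y ×ˢ (Set.univ : Set β)))) := by
    intro p q hadj
    rw [SimpleGraph.deleteEdges_adj] at hadj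
    have hp1 : p.1 ∈ X ∪ Y := hunion ▸ Set.mem_univ _
    have hq1 : q.1 ∈ X ∪ Y := hunion ▸ Set.mem_univ _
    rcases hp1 with hp | hp
    · left
      refine ⟨⟨hp, trivial⟩, ⟨?_, trivial⟩⟩
      rcases hq1 with hq | hq
      · exact hq
      · exact absurd (hTmem p q hadj.1 hp hq) hadj.2
    · right
      refine ⟨⟨hp, trivial⟩, ⟨?_, trivial⟩⟩
      rcases hq1 with hq | hq
      · have := hTmem q p hadj.1.symm hq hp
        rw [Sym2.eq_swap] at this
        exact absurd this hadj.2
      · exact hq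
  -- Part 2
  have part2 : ¬ ((tensorProd G H).deleteEdges T).Connected := by
    intro hconn
    obtain ⟨x, hx⟩ := hXne
    obtain ⟨y, hy⟩ := hYne
    obtain ⟨e, he⟩ := hHe
    obtain ⟨b, b', hbb⟩ : ∃ b b' : β, H.Adj b b' := by
      induction e with
      | h b b' => exact ⟨b, b', he⟩
    have hdisj2 : Disjoint (X ×ˢ (Set.univ : Set β)) (Y ×ˢ (Set.univ : Set β)) := by
      rw [Set.disjoint_left]
      rintro ⟨a, c⟩ ⟨ha, -⟩ ⟨ha', -⟩
      exact Set.disjoint_left.mp hdisj ha ha'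
    have := aux_side_inv hdisj2 hside (hconn.preconnected (x, b) (y, b)) ⟨hx, trivial⟩
    exact Set.disjoint_left.mp hdisj this.1 hy
  -- the crossing edges of G
  set D : Set (α × α) := {p | p.1 ∈ X ∧ p.2 ∈ Y ∧ G.Adj p.1 p.2} with hD
  set S' : Set (Sym2 α) := (fun p : α × α => s(p.1, p.2)) '' D with hS'
  have hS'sub : S' ⊆ S := by
    rintro e ⟨⟨a, a'⟩, ⟨ha, ha', hadj⟩, rfl⟩
    by_contra hnS
    have hreach : (G.deleteEdges S).Reachable a a' := (SimpleGraph.Adj.reachable (SimpleGraph.deleteEdges_adj.mpr ⟨hadj, hnS⟩))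
    rcases (hcomp a a').mp hreach with ⟨-, h2⟩ | ⟨h1, -⟩
    · exact Set.disjoint_left.mp hdisj h2 ha'
    · exact Set.disjoint_left.mp hdisj ha h1
  have hS'G : S' ⊆ G.edgeSet := fun e he => hSsub (hS'sub he)
  have hS'disc : ¬ (G.deleteEdges S').Connected := by
    intro hconn
    obtain ⟨x, hx⟩ := hXne
    obtain ⟨y, hy⟩ := hYne
    have hside' : ∀ u v : α, (G.deleteEdges S').Adj u v →
        ((u ∈ X ∧ v ∈ X) ∨ (u ∈ Y ∧ v ∈ Y)) := by
      intro u v hadj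
      rw [SimpleGraph.deleteEdges_adj] at hadj
      have hu : u ∈ X ∪ Y := hunion ▸ Set.mem_univ _
      have hv : v ∈ X ∪ Y := hunion ▸ Set.mem_univ _
      rcases hu with hu | hu
      · left
        refine ⟨hu, ?_⟩
        rcases hv with hv | hv
        · exact hv
        · exact absurd (⟨(u, v), ⟨hu, hv, hadj.1⟩, rfl⟩ : s(u, v) ∈ S') hadj.2
      · right
        refine ⟨hu, ?_⟩
        rcases hv with hv | hv
        · have : s(v, u) ∈ S' := ⟨(v, u), ⟨hv, hu, hadj.1.symm⟩, rfl⟩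
          rw [Sym2.eq_swap] at this
          exact absurd this hadj.2
        · exact hv
    have := aux_side_inv hdisj hside' (hconn.preconnected x y) hx
    exact Set.disjoint_left.mp hdisj this hy
  have hle : edgeConn G ≤ S'.ncard :=
    Nat.sInf_le ⟨S', hS'G, hS'disc, rfl⟩
  have hS'card : S'.ncard = edgeConn G :=
    le_antisymm (hSmin ▸ Set.ncard_le_ncard hS'sub S.toFinite) hle
  -- D → S' is a bijection
  have hDinj : Set.InjOn (fun p : α × α => s(p.1, p.2)) D := by
    rintro ⟨a, a'⟩ ⟨ha, ha', -⟩ ⟨c, c'⟩ ⟨hc, hc', -⟩ heq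
    simp only [Sym2.eq, Sym2.rel_iff', Prod.mk.injEq, Prod.swap_prod_mk] at heq
    rcases heq with ⟨h1, h2⟩ | ⟨h1, h2⟩
    · exact Prod.ext h1 h2
    · exact absurd (h1 ▸ ha) (fun h => Set.disjoint_left.mp hdisj h hc')
  have hDcard : D.ncard = edgeConn G := by
    rw [← hS'card, hS', Set.ncard_image_of_injOn hDinj]
  -- the ordered adjacencies of H
  set O : Set (β × β) := {p | H.Adj p.1 p.2} with hO
  -- the ordered crossing adjacencies of the tensor product
  set E : Set ((α × β) × (α × β)) :=
    {p | p.1.1 ∈ X ∧ p.2.1 ∈ Y ∧ (tensorProd G H).Adj p.1 p.2} with hE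
  have hTE : T = (fun p : (α × β) × (α × β) => s(p.1, p.2)) '' E := by
    ext e
    constructor
    · rintro ⟨hes, p, q, rfl, hp, hq⟩
      exact ⟨(p, q), ⟨hp, hq, (tensorProd G H).mem_edgeSet.mp hes⟩, rfl⟩
    · rintro ⟨⟨p, q⟩, ⟨hp, hq, hadj⟩, rfl⟩
      exact ⟨(tensorProd G H).mem_edgeSet.mpr hadj, p, q, rfl, hp, hq⟩
  have hEinj : Set.InjOn (fun p : (α × β) × (α × β) => s(p.1, p.2)) E := by
    rintro ⟨p, q⟩ ⟨hp, hq, -⟩ ⟨p', q'⟩ ⟨hp', hq', -⟩ heq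
    simp only [Sym2.eq, Sym2.rel_iff', Prod.mk.injEq, Prod.swap_prod_mk] at heq
    rcases heq with ⟨h1, h2⟩ | ⟨h1, h2⟩
    · exact Prod.ext h1 h2
    · exact absurd (h1 ▸ hp) (fun h => Set.disjoint_left.mp hdisj h hq')
  -- E is in bijection with D ×ˢ O
  have hEDO : (Equiv.prodProdProdComm α β α β) '' E = D ×ˢ O := by
    ext ⟨⟨a, a'⟩, ⟨b, b'⟩⟩
    constructor
    · rintro ⟨⟨⟨u, v⟩, ⟨u', v'⟩⟩, ⟨hu, hu', hadj⟩, heq⟩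
      simp only [Equiv.prodProdProdComm_apply, Prod.mk.injEq] at heq
      obtain ⟨⟨h1, h2⟩, h3, h4⟩ := heq
      subst h1; subst h2; subst h3; subst h4
      exact ⟨⟨hu, hu', hadj.1⟩, hadj.2⟩
    · rintro ⟨⟨ha, ha', hG⟩, hH⟩
      exact ⟨((a, b), (a', b')), ⟨ha, ha', hG, hH⟩, rfl⟩
  have hEcard : E.ncard = D.ncard * O.ncard := by
    rw [← aux_ncard_prod, ← hEDO,
      Set.ncard_image_of_injective _ (Equiv.prodProdProdComm α β α β).injective]
  have part1 : T.ncard = 2 * edgeConn G * H.edgeSet.ncard := by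
    rw [hTE, Set.ncard_image_of_injOn hEinj, hEcard, hDcard, hO, aux_darts]
    ring
  exact ⟨part1, part2, part3⟩
end

section
/- Let G and H be finite simple graphs with δ(G) ≤ δ(H), let S be a minimum edge-cut in G × H with |S| < δ(G × H), and let B, W be the two connected components of (G × H) − S. Then for every vertex (x,y) of G × H, either N_G(x) × {y} ⊆ B or N_G(x) × {y} ⊆ W. -/
open SimpleGraph

private lemma add_le_mul_succ {p q : ℕ} (hp : 1 ≤ p) (hq : 1 ≤ q) :
    p + q ≤ p * q + 1 := by
  obtain ⟨p', rfl⟩ := Nat.exists_eq_add_of_le hp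
  obtain ⟨q', rfl⟩ := Nat.exists_eq_add_of_le hq
  have h : (1 + p') * (1 + q') = 1 + p' + q' + p' * q' := by ring
  omega

section Aux

variable {α β : Type*} [Fintype α] [Fintype β]
variable (G : SimpleGraph α) (H : SimpleGraph β) [DecidableRel G.Adj] [DecidableRel H.Adj]

private lemma tensor_degree (x : α) (y : β) :
    (tensorProd G H).degree (x, y) = G.degree x * H.degree y := by
  have hset : (tensorProd G H).neighborFinset (x, y)
      = (G.neighborFinset x) ×ˢ (H.neighborFinset y) := by
    ext ⟨c, d⟩
    rw [SimpleGraph.mem_neighborFinset]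
    simp only [SimpleGraph.mem_neighborFinset, Finset.mem_product, tensorProd]
  show ((tensorProd G H).neighborFinset (x, y)).card = _
  rw [hset, Finset.card_product]
  rfl

/-- Family of edges of the cut coming from a "bad" (bichromatic) fiber
`N_G(c) × {w}`: for each ζ ∈ N_H(w), the vertex `(c,ζ)` is adjacent to the
whole fiber, hence has a cut edge into it. -/
private lemma bad_family (S : Set (Sym2 (α × β))) (B W : Set (α × β))
    (htot : ∀ p, p ∈ B ∨ p ∈ W)
    (hcross : ∀ p q, (tensorProd G H).Adj p q → p ∈ B → q ∈ W → s(p, q) ∈ S)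
    (c : α) (w : β)
    (hbad : ∃ d₁ d₂, G.Adj c d₁ ∧ G.Adj c d₂ ∧ (d₁, w) ∈ B ∧ (d₂, w) ∈ W) :
    ∃ F : Finset (Sym2 (α × β)), F.card = H.degree w ∧ ↑F ⊆ S ∧
      ∀ e ∈ F, ∃ ζ d, G.Adj c d ∧ e = s((c, ζ), (d, w)) := by
  classical
  obtain ⟨d₁, d₂, h1, h2, hB, hW⟩ := hbad
  have hpick : ∀ ζ, H.Adj w ζ → ∃ d, G.Adj c d ∧ s((c, ζ), (d, w)) ∈ S := by
    intro ζ hζ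
    rcases htot (c, ζ) with hb | hw
    · exact ⟨d₂, h2, hcross (c, ζ) (d₂, w) ⟨h2, hζ.symm⟩ hb hW⟩
    · refine ⟨d₁, h1, ?_⟩
      have hm := hcross (d₁, w) (c, ζ) ⟨h1.symm, hζ⟩ hB hw
      rw [Sym2.eq_swap]
      exact hm
  set pk : β → α := fun ζ =>
    if h : ∃ d, G.Adj c d ∧ s((c, ζ), (d, w)) ∈ S then h.choose else d₁ with hpk
  have hpk' : ∀ ζ, H.Adj w ζ → G.Adj c (pk ζ) ∧ s((c, ζ), (pk ζ, w)) ∈ S := by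
    intro ζ hζ
    have h := hpick ζ hζ
    rw [hpk]
    simp only [dif_pos h]
    exact h.choose_spec
  refine ⟨(H.neighborFinset w).image (fun ζ => s((c, ζ), (pk ζ, w))), ?_, ?_, ?_⟩
  · rw [Finset.card_image_of_injOn]
    · rfl
    · intro ζ₁ hζ₁ ζ₂ hζ₂ heq
      have h₁ : H.Adj w ζ₁ := by
        simpa using hζ₁
      rw [Sym2.eq_iff] at heq
      rcases heq with ⟨he1, _⟩ | ⟨he1, _⟩
      · exact congrArg Prod.snd he1
      · exact absurd (congrArg Prod.snd he1).symm h₁.ne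
  · intro e he
    simp only [Finset.coe_image, Set.mem_image, Finset.mem_coe,
      SimpleGraph.mem_neighborFinset] at he
    obtain ⟨ζ, hζ, rfl⟩ := he
    exact (hpk' ζ hζ).2
  · intro e he
    rw [Finset.mem_image] at he
    obtain ⟨ζ, hζ, rfl⟩ := he
    have hζ' : H.Adj w ζ := by simpa using hζ
    exact ⟨ζ, pk ζ, (hpk' ζ hζ').1, rfl⟩

/-- Family of edges of the cut from a vertex `(c,y)` all of whose
"fiber neighbours" at level `w'` are on the other side. -/
private lemma mono_family (S : Set (Sym2 (α × β))) (c : α) (y w' : β) (hyw : y ≠ w')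
    (hmem : ∀ d, G.Adj c d → s((c, y), (d, w')) ∈ S) :
    ∃ F : Finset (Sym2 (α × β)), F.card = G.degree c ∧ ↑F ⊆ S ∧
      ∀ e ∈ F, ∃ d, G.Adj c d ∧ e = s((c, y), (d, w')) := by
  classical
  refine ⟨(G.neighborFinset c).image (fun d => s((c, y), (d, w'))), ?_, ?_, ?_⟩
  · rw [Finset.card_image_of_injOn]
    · rfl
    · intro a₁ h₁ a₂ h₂ heq
      rw [Sym2.eq_iff] at heq
      rcases heq with ⟨_, he2⟩ | ⟨he1, _⟩
      · exact congrArg Prod.fst he2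
      · exact absurd (congrArg Prod.snd he1) hyw
  · intro e he
    simp only [Finset.coe_image, Set.mem_image, Finset.mem_coe,
      SimpleGraph.mem_neighborFinset] at he
    obtain ⟨d, hd, rfl⟩ := he
    exact hmem d hd
  · intro e he
    rw [Finset.mem_image] at he
    obtain ⟨d, hd, rfl⟩ := he
    exact ⟨d, by simpa using hd, rfl⟩

/-- Family of cut edges between two levels, indexed by a product of
column sets. -/
private lemma pair_family (S : Set (Sym2 (α × β))) (y z : β) (hyz : y ≠ z)
    (P Q : Finset α)
    (hmem : ∀ c ∈ P, ∀ d ∈ Q, s((c, y), (d, z)) ∈ S) :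
    ∃ F : Finset (Sym2 (α × β)), F.card = P.card * Q.card ∧ ↑F ⊆ S ∧
      ∀ e ∈ F, ∃ c d, c ∈ P ∧ d ∈ Q ∧ e = s((c, y), (d, z)) := by
  classical
  refine ⟨(P ×ˢ Q).image (fun cd => s((cd.1, y), (cd.2, z))), ?_, ?_, ?_⟩
  · rw [Finset.card_image_of_injOn]
    · exact Finset.card_product P Q
    · intro a₁ h₁ a₂ h₂ heq
      rw [Sym2.eq_iff] at heq
      rcases heq with ⟨he1, he2⟩ | ⟨he1, _⟩
      · injection he1 with hh1 _
        injection he2 with hh2 _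
        exact Prod.ext_iff.mpr ⟨hh1, hh2⟩
      · exact absurd (congrArg Prod.snd he1) hyz
  · intro e he
    simp only [Finset.coe_image, Set.mem_image, Finset.mem_coe, Finset.mem_product] at he
    obtain ⟨⟨cc, dd⟩, ⟨hc, hd⟩, rfl⟩ := he
    exact hmem cc hc dd hd
  · intro e he
    rw [Finset.mem_image] at he
    obtain ⟨⟨cc, dd⟩, hcd, rfl⟩ := he
    rw [Finset.mem_product] at hcd
    exact ⟨cc, dd, hcd.1, hcd.2, rfl⟩

end Aux

theorem neighborhood_monochromatic {α β : Type*} [Fintype α] [Fintype β]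
    [Nonempty α] [Nonempty β] (G : SimpleGraph α) (H : SimpleGraph β)
    [DecidableRel G.Adj] [DecidableRel H.Adj]
    (hdelta : G.minDegree ≤ H.minDegree)
    (S : Set (Sym2 (α × β))) (hSsub : S ⊆ (tensorProd G H).edgeSet)
    (hSdisc : ¬ ((tensorProd G H).deleteEdges S).Connected)
    (hSmin : S.ncard = edgeConn (tensorProd G H))
    (hSlt : S.ncard < (tensorProd G H).minDegree)
    (B W : Set (α × β)) (hBne : B.Nonempty) (hWne : W.Nonempty)
    (hunion : B ∪ W = Set.univ) (hdisj : Disjoint B W)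
    (hcomp : ∀ p q : α × β, ((tensorProd G H).deleteEdges S).Reachable p q ↔
      ((p ∈ B ∧ q ∈ B) ∨ (p ∈ W ∧ q ∈ W))) :
    ∀ (x : α) (y : β),
      ({p : α × β | p.1 ∈ G.neighborSet x ∧ p.2 = y} ⊆ B) ∨
      ({p : α × β | p.1 ∈ G.neighborSet x ∧ p.2 = y} ⊆ W) := by
  classical
  intro x y
  by_contra hcon
  push_neg at hcon
  obtain ⟨hnB, hnW⟩ := hcon
  rw [Set.not_subset] at hnB hnW
  obtain ⟨pv, hpmem, hpB⟩ := hnB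
  obtain ⟨qv, hqmem, hqW⟩ := hnW
  have htot : ∀ r : α × β, r ∈ B ∨ r ∈ W := by
    intro r
    have hr : r ∈ B ∪ W := by rw [hunion]; exact Set.mem_univ r
    exact hr
  have hdisj' : ∀ r : α × β, r ∈ B → r ∈ W → False := fun r hb hw =>
    Set.disjoint_left.mp hdisj hb hw
  have hcross : ∀ p q, (tensorProd G H).Adj p q → p ∈ B → q ∈ W → s(p, q) ∈ S := by
    intro p q hadj hp hq
    by_contra hns
    have hadj' : ((tensorProd G H).deleteEdges S).Adj p q := by
      rw [SimpleGraph.deleteEdges_adj]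
      exact ⟨hadj, hns⟩
    rcases (hcomp p q).mp hadj'.reachable with ⟨_, hqB⟩ | ⟨hpW, _⟩
    · exact hdisj' q hqB hq
    · exact hdisj' p hp hpW
  have hpW : pv ∈ W := (htot pv).resolve_left hpB
  have hqB : qv ∈ B := (htot qv).resolve_right hqW
  have hq2 : qv.2 = y := hqmem.2
  have hp2 : pv.2 = y := hpmem.2
  have hxa : G.Adj x qv.1 := hqmem.1
  have hxb : G.Adj x pv.1 := hpmem.1
  have haB : (qv.1, y) ∈ B := by rw [← hq2]; exact hqB
  have hbW : (pv.1, y) ∈ W := by rw [← hp2]; exact hpW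
  have hminle : (tensorProd G H).minDegree ≤ G.minDegree * H.minDegree := by
    obtain ⟨x₀, hx₀⟩ := G.exists_minimal_degree_vertex
    obtain ⟨y₀, hy₀⟩ := H.exists_minimal_degree_vertex
    calc (tensorProd G H).minDegree ≤ (tensorProd G H).degree (x₀, y₀) :=
          (tensorProd G H).minDegree_le_degree (x₀, y₀)
      _ = G.degree x₀ * H.degree y₀ := tensor_degree G H x₀ y₀
      _ = G.minDegree * H.minDegree := by rw [hx₀, hy₀]
  have hS : S.ncard < G.minDegree * H.minDegree := lt_of_lt_of_le hSlt hminle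
  suffices hbig : ∃ T : Finset (Sym2 (α × β)), ↑T ⊆ S ∧
      G.minDegree * H.minDegree ≤ T.card by
    obtain ⟨T, hTsub, hTcard⟩ := hbig
    have hle : (T : Set (Sym2 (α × β))).ncard ≤ S.ncard :=
      Set.ncard_le_ncard hTsub (Set.toFinite S)
    rw [Set.ncard_coe_finset] at hle
    omega
  by_cases hsplit : ∃ a b : α, G.Adj x a ∧ G.Adj x b ∧ (a, y) ∈ B ∧ (b, y) ∈ W ∧ ¬ G.Adj a b
  · -- CASE 1 : a nonadjacent bichromatic pair in the fiber
    obtain ⟨a, b, hxa', hxb', haB', hbW', hnab⟩ := hsplit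
    have hTf' : ∀ w', ∃ F : Finset (Sym2 (α × β)), w' ∈ H.neighborFinset y →
        (G.minDegree ≤ F.card ∧ ↑F ⊆ S ∧
          ∀ e ∈ F, ∃ c ζ d, (c = a ∨ c = b) ∧ G.Adj c d ∧ e = s((c, ζ), (d, w'))) := by
      intro w'
      by_cases hw' : w' ∈ H.neighborFinset y
      swap
      · exact ⟨∅, fun h => absurd h hw'⟩
      have hyw' : H.Adj y w' := by simpa using hw'
      by_cases hA : ∃ d₁ d₂, G.Adj a d₁ ∧ G.Adj a d₂ ∧ (d₁, w') ∈ B ∧ (d₂, w') ∈ W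
      · obtain ⟨F, hc, hs, hsh⟩ := bad_family G H S B W htot hcross a w' hA
        refine ⟨F, fun _ => ⟨?_, hs, ?_⟩⟩
        · rw [hc]; exact le_trans hdelta (H.minDegree_le_degree w')
        · intro e he
          obtain ⟨ζ, d, had, hee⟩ := hsh e he
          exact ⟨a, ζ, d, Or.inl rfl, had, hee⟩
      by_cases hB2 : ∃ d₁ d₂, G.Adj b d₁ ∧ G.Adj b d₂ ∧ (d₁, w') ∈ B ∧ (d₂, w') ∈ W
      · obtain ⟨F, hc, hs, hsh⟩ := bad_family G H S B W htot hcross b w' hB2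
        refine ⟨F, fun _ => ⟨?_, hs, ?_⟩⟩
        · rw [hc]; exact le_trans hdelta (H.minDegree_le_degree w')
        · intro e he
          obtain ⟨ζ, d, had, hee⟩ := hsh e he
          exact ⟨b, ζ, d, Or.inr rfl, had, hee⟩
      rcases htot (x, w') with hxB | hxW
      · -- fiber over b at level w' lies inside B; use (b,y) ∈ W
        have hfib : ∀ d, G.Adj b d → (d, w') ∈ B := by
          intro d hbd
          rcases htot (d, w') with h | h
          · exact h
          · exact absurd ⟨x, d, hxb'.symm, hbd, hxB, h⟩ hB2
        have hmem : ∀ d, G.Adj b d → s((b, y), (d, w')) ∈ S := by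
          intro d hbd
          have hm := hcross (d, w') (b, y) ⟨hbd.symm, hyw'.symm⟩ (hfib d hbd) hbW'
          rw [Sym2.eq_swap]
          exact hm
        obtain ⟨F, hc, hs, hsh⟩ := mono_family G S b y w' hyw'.ne hmem
        refine ⟨F, fun _ => ⟨?_, hs, ?_⟩⟩
        · rw [hc]; exact G.minDegree_le_degree b
        · intro e he
          obtain ⟨d, had, hee⟩ := hsh e he
          exact ⟨b, y, d, Or.inr rfl, had, hee⟩
      · -- fiber over a at level w' lies inside W; use (a,y) ∈ B
        have hfib : ∀ d, G.Adj a d → (d, w') ∈ W := by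
          intro d had
          rcases htot (d, w') with h | h
          · exact absurd ⟨d, x, had, hxa'.symm, h, hxW⟩ hA
          · exact h
        have hmem : ∀ d, G.Adj a d → s((a, y), (d, w')) ∈ S := by
          intro d had
          exact hcross (a, y) (d, w') ⟨had, hyw'⟩ haB' (hfib d had)
        obtain ⟨F, hc, hs, hsh⟩ := mono_family G S a y w' hyw'.ne hmem
        refine ⟨F, fun _ => ⟨?_, hs, ?_⟩⟩
        · rw [hc]; exact G.minDegree_le_degree a
        · intro e he
          obtain ⟨d, had, hee⟩ := hsh e he
          exact ⟨a, y, d, Or.inl rfl, had, hee⟩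
    choose Tf hTf using hTf'
    have hdisjT : ∀ w₁ ∈ H.neighborFinset y, ∀ w₂ ∈ H.neighborFinset y, w₁ ≠ w₂ →
        Disjoint (Tf w₁) (Tf w₂) := by
      intro w₁ h₁ w₂ h₂ hne
      rw [Finset.disjoint_left]
      intro e he1 he2
      obtain ⟨c₁, ζ₁, d₁, hc₁, had₁, hee₁⟩ := (hTf w₁ h₁).2.2 e he1
      obtain ⟨c₂, ζ₂, d₂, hc₂, had₂, hee₂⟩ := (hTf w₂ h₂).2.2 e he2
      rw [hee₁, Sym2.eq_iff] at hee₂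
      rcases hee₂ with ⟨_, hA2⟩ | ⟨hA1, _⟩
      · injection hA2 with _ hh
        exact hne hh
      · injection hA1 with hcd _
        have hadj : G.Adj c₂ c₁ := by rw [hcd]; exact had₂
        rcases hc₁ with rfl | rfl <;> rcases hc₂ with rfl | rfl
        · exact G.loopless.irrefl _ hadj
        · exact hnab hadj.symm
        · exact hnab hadj
        · exact G.loopless.irrefl _ hadj
    refine ⟨(H.neighborFinset y).biUnion Tf, ?_, ?_⟩
    · intro e he
      rw [Finset.mem_coe, Finset.mem_biUnion] at he
      obtain ⟨w', hw', hmem⟩ := he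
      exact (hTf w' hw').2.1 hmem
    · rw [Finset.card_biUnion hdisjT]
      have h1 : (H.neighborFinset y).card • G.minDegree
          ≤ ∑ w' ∈ H.neighborFinset y, (Tf w').card :=
        Finset.card_nsmul_le_sum _ _ _ (fun w' hw' => (hTf w' hw').1)
      have h2 : (H.neighborFinset y).card = H.degree y := rfl
      have h3 : H.minDegree ≤ H.degree y := H.minDegree_le_degree y
      calc G.minDegree * H.minDegree ≤ G.minDegree * H.degree y :=
            Nat.mul_le_mul_left _ h3
        _ = (H.neighborFinset y).card * G.minDegree := by rw [h2, Nat.mul_comm]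
        _ = (H.neighborFinset y).card • G.minDegree := by rw [smul_eq_mul]
        _ ≤ _ := h1
  · -- CASE 2 : every bichromatic pair in the fiber is adjacent
    push_neg at hsplit
    have hyBad : ∃ d₁ d₂, G.Adj x d₁ ∧ G.Adj x d₂ ∧ (d₁, y) ∈ B ∧ (d₂, y) ∈ W :=
      ⟨qv.1, pv.1, hxa, hxb, haB, hbW⟩
    set BadH : Finset β := Finset.univ.filter
      (fun h => ∃ d₁ d₂, G.Adj x d₁ ∧ G.Adj x d₂ ∧ (d₁, h) ∈ B ∧ (d₂, h) ∈ W) with hBadH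
    set MonoNbr : Finset β := (H.neighborFinset y).filter
      (fun z => ¬ ∃ d₁ d₂, G.Adj x d₁ ∧ G.Adj x d₂ ∧ (d₁, z) ∈ B ∧ (d₂, z) ∈ W) with hMono
    have hyBadH : y ∈ BadH := Finset.mem_filter.mpr ⟨Finset.mem_univ y, hyBad⟩
    have hF1' : ∀ h, ∃ F : Finset (Sym2 (α × β)), h ∈ BadH →
        (F.card = H.degree h ∧ ↑F ⊆ S ∧
          ∀ e ∈ F, ∃ ζ d, G.Adj x d ∧ e = s((x, ζ), (d, h))) := by
      intro h
      by_cases hh : ∃ d₁ d₂, G.Adj x d₁ ∧ G.Adj x d₂ ∧ (d₁, h) ∈ B ∧ (d₂, h) ∈ W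
      · obtain ⟨F, h1, h2, h3⟩ := bad_family G H S B W htot hcross x h hh
        exact ⟨F, fun _ => ⟨h1, h2, h3⟩⟩
      · refine ⟨∅, fun hmem => absurd ?_ hh⟩
        exact (Finset.mem_filter.mp hmem).2
    choose F1 hF1 using hF1'
    set NB : Finset α := (G.neighborFinset x).filter (fun c => (c, y) ∈ B) with hNB
    set NW : Finset α := (G.neighborFinset x).filter (fun c => (c, y) ∈ W) with hNW
    have hNBmem : qv.1 ∈ NB := Finset.mem_filter.mpr ⟨by simpa using hxa, haB⟩
    have hNWmem : pv.1 ∈ NW := Finset.mem_filter.mpr ⟨by simpa using hxb, hbW⟩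
    have hNBpos : 1 ≤ NB.card := Finset.card_pos.mpr ⟨qv.1, hNBmem⟩
    have hNWpos : 1 ≤ NW.card := Finset.card_pos.mpr ⟨pv.1, hNWmem⟩
    have hNBWsum : NB.card + NW.card = G.degree x := by
      have hdisjN : Disjoint NB NW := by
        rw [Finset.disjoint_left]
        intro c hcB hcW
        exact hdisj' (c, y) (Finset.mem_filter.mp hcB).2 (Finset.mem_filter.mp hcW).2
      have hun : NB ∪ NW = G.neighborFinset x := by
        ext c
        simp only [hNB, hNW, Finset.mem_union, Finset.mem_filter]
        constructor
        · rintro (⟨h, _⟩ | ⟨h, _⟩) <;> exact h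
        · intro h
          rcases htot (c, y) with hb | hw
          · exact Or.inl ⟨h, hb⟩
          · exact Or.inr ⟨h, hw⟩
      rw [← Finset.card_union_of_disjoint hdisjN, hun]
      rfl
    have hF2' : ∀ z, ∃ F : Finset (Sym2 (α × β)), z ∈ MonoNbr →
        (F.card = NB.card * NW.card ∧ ↑F ⊆ S ∧
          ∀ e ∈ F, ∃ c d, G.Adj x c ∧ G.Adj x d ∧ e = s((c, y), (d, z))) := by
      intro z
      by_cases hz : z ∈ MonoNbr
      swap
      · exact ⟨∅, fun h => absurd h hz⟩
      have hyz : H.Adj y z := by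
        have := (Finset.mem_filter.mp hz).1
        simpa using this
      have hnb := (Finset.mem_filter.mp hz).2
      rcases htot (qv.1, z) with hbz | hwz
      · -- whole fiber at level z in B
        have hfib : ∀ d, G.Adj x d → (d, z) ∈ B := by
          intro d hxd
          rcases htot (d, z) with h | h
          · exact h
          · exact absurd ⟨qv.1, d, hxa, hxd, hbz, h⟩ hnb
        have hmem : ∀ c ∈ NW, ∀ d ∈ NB, s((c, y), (d, z)) ∈ S := by
          intro c hc d hd
          have hcW : (c, y) ∈ W := (Finset.mem_filter.mp hc).2
          have hdB : (d, y) ∈ B := (Finset.mem_filter.mp hd).2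
          have hxc : G.Adj x c := by
            have := (Finset.mem_filter.mp hc).1; simpa using this
          have hxd : G.Adj x d := by
            have := (Finset.mem_filter.mp hd).1; simpa using this
          have hadj : G.Adj d c := hsplit d c hxd hxc hdB hcW
          have hm := hcross (d, z) (c, y) ⟨hadj, hyz.symm⟩ (hfib d hxd) hcW
          rw [Sym2.eq_swap]
          exact hm
        obtain ⟨F, h1, h2, h3⟩ := pair_family S y z hyz.ne NW NB hmem
        refine ⟨F, fun _ => ⟨?_, h2, ?_⟩⟩
        · rw [h1, Nat.mul_comm]
        · intro e he
          obtain ⟨c, d, hc, hd, hee⟩ := h3 e he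
          have hxc : G.Adj x c := by
            have := (Finset.mem_filter.mp hc).1; simpa using this
          have hxd : G.Adj x d := by
            have := (Finset.mem_filter.mp hd).1; simpa using this
          exact ⟨c, d, hxc, hxd, hee⟩
      · -- whole fiber at level z in W
        have hfib : ∀ d, G.Adj x d → (d, z) ∈ W := by
          intro d hxd
          rcases htot (d, z) with h | h
          · exact absurd ⟨d, qv.1, hxd, hxa, h, hwz⟩ hnb
          · exact h
        have hmem : ∀ c ∈ NB, ∀ d ∈ NW, s((c, y), (d, z)) ∈ S := by
          intro c hc d hd
          have hcB : (c, y) ∈ B := (Finset.mem_filter.mp hc).2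
          have hdW : (d, y) ∈ W := (Finset.mem_filter.mp hd).2
          have hxc : G.Adj x c := by
            have := (Finset.mem_filter.mp hc).1; simpa using this
          have hxd : G.Adj x d := by
            have := (Finset.mem_filter.mp hd).1; simpa using this
          have hadj : G.Adj c d := hsplit c d hxc hxd hcB hdW
          exact hcross (c, y) (d, z) ⟨hadj, hyz⟩ hcB (hfib d hxd)
        obtain ⟨F, h1, h2, h3⟩ := pair_family S y z hyz.ne NB NW hmem
        refine ⟨F, fun _ => ⟨h1, h2, ?_⟩⟩
        · intro e he
          obtain ⟨c, d, hc, hd, hee⟩ := h3 e he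
          have hxc : G.Adj x c := by
            have := (Finset.mem_filter.mp hc).1; simpa using this
          have hxd : G.Adj x d := by
            have := (Finset.mem_filter.mp hd).1; simpa using this
          exact ⟨c, d, hxc, hxd, hee⟩
    choose F2 hF2 using hF2'
    have hdisjT1 : ∀ h₁ ∈ BadH, ∀ h₂ ∈ BadH, h₁ ≠ h₂ → Disjoint (F1 h₁) (F1 h₂) := by
      intro h₁ hh₁ h₂ hh₂ hne
      rw [Finset.disjoint_left]
      intro e he1 he2
      obtain ⟨ζ₁, d₁, hxd₁, hee₁⟩ := (hF1 h₁ hh₁).2.2 e he1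
      obtain ⟨ζ₂, d₂, hxd₂, hee₂⟩ := (hF1 h₂ hh₂).2.2 e he2
      rw [hee₁, Sym2.eq_iff] at hee₂
      rcases hee₂ with ⟨_, hA2⟩ | ⟨hA1, _⟩
      · injection hA2 with _ hh
        exact hne hh
      · injection hA1 with hxx _
        rw [← hxx] at hxd₂
        exact G.loopless.irrefl x hxd₂
    have hdisjT2 : ∀ z₁ ∈ MonoNbr, ∀ z₂ ∈ MonoNbr, z₁ ≠ z₂ → Disjoint (F2 z₁) (F2 z₂) := by
      intro z₁ hz₁ z₂ hz₂ hne
      rw [Finset.disjoint_left]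
      intro e he1 he2
      obtain ⟨c₁, d₁, hxc₁, hxd₁, hee₁⟩ := (hF2 z₁ hz₁).2.2 e he1
      obtain ⟨c₂, d₂, hxc₂, hxd₂, hee₂⟩ := (hF2 z₂ hz₂).2.2 e he2
      rw [hee₁, Sym2.eq_iff] at hee₂
      rcases hee₂ with ⟨_, hA2⟩ | ⟨hA1, _⟩
      · injection hA2 with _ hh
        exact hne hh
      · injection hA1 with _ hyz2
        have hadj : H.Adj y z₂ := by
          have := (Finset.mem_filter.mp hz₂).1
          simpa using this
        rw [← hyz2] at hadj
        exact H.loopless.irrefl y hadj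
    have hdisjT12 : Disjoint (BadH.biUnion F1) (MonoNbr.biUnion F2) := by
      rw [Finset.disjoint_left]
      intro e he1 he2
      rw [Finset.mem_biUnion] at he1 he2
      obtain ⟨h, hh, hmem1⟩ := he1
      obtain ⟨z, hz, hmem2⟩ := he2
      obtain ⟨ζ, d, hxd, hee₁⟩ := (hF1 h hh).2.2 e hmem1
      obtain ⟨c, d', hxc, hxd', hee₂⟩ := (hF2 z hz).2.2 e hmem2
      rw [hee₁, Sym2.eq_iff] at hee₂
      rcases hee₂ with ⟨hA1, _⟩ | ⟨hA1, _⟩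
      · injection hA1 with hxx _
        rw [← hxx] at hxc
        exact G.loopless.irrefl x hxc
      · injection hA1 with hxx _
        rw [← hxx] at hxd'
        exact G.loopless.irrefl x hxd'
    have hcard1 : BadH.card * H.minDegree ≤ (BadH.biUnion F1).card := by
      rw [Finset.card_biUnion hdisjT1]
      have h1 : BadH.card • H.minDegree ≤ ∑ h ∈ BadH, (F1 h).card :=
        Finset.card_nsmul_le_sum _ _ _
          (fun h hh => by rw [(hF1 h hh).1]; exact H.minDegree_le_degree h)
      simpa [smul_eq_mul] using h1
    have hcard2 : MonoNbr.card * (NB.card * NW.card) ≤ (MonoNbr.biUnion F2).card := by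
      rw [Finset.card_biUnion hdisjT2]
      have h1 : MonoNbr.card • (NB.card * NW.card) ≤ ∑ z ∈ MonoNbr, (F2 z).card :=
        Finset.card_nsmul_le_sum _ _ _
          (fun z hz => le_of_eq (hF2 z hz).1.symm)
      simpa [smul_eq_mul] using h1
    have hmono_count : H.degree y + 1 ≤ MonoNbr.card + BadH.card := by
      have hsplitc : ((H.neighborFinset y).filter
          (fun h => ∃ d₁ d₂, G.Adj x d₁ ∧ G.Adj x d₂ ∧ (d₁, h) ∈ B ∧ (d₂, h) ∈ W)).card
          + MonoNbr.card = H.degree y := by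
        rw [hMono]
        exact Finset.card_filter_add_card_filter_not _
      have hsub : (H.neighborFinset y).filter
          (fun h => ∃ d₁ d₂, G.Adj x d₁ ∧ G.Adj x d₂ ∧ (d₁, h) ∈ B ∧ (d₂, h) ∈ W)
          ⊆ BadH.erase y := by
        intro z hz
        obtain ⟨hz1, hz2⟩ := Finset.mem_filter.mp hz
        have hyzadj : H.Adj y z := by simpa using hz1
        exact Finset.mem_erase.mpr ⟨hyzadj.ne',
          Finset.mem_filter.mpr ⟨Finset.mem_univ z, hz2⟩⟩
      have hle : ((H.neighborFinset y).filter
          (fun h => ∃ d₁ d₂, G.Adj x d₁ ∧ G.Adj x d₂ ∧ (d₁, h) ∈ B ∧ (d₂, h) ∈ W)).card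
          ≤ BadH.card - 1 := by
        calc _ ≤ (BadH.erase y).card := Finset.card_le_card hsub
          _ = BadH.card - 1 := Finset.card_erase_of_mem hyBadH
      have hb1 : 1 ≤ BadH.card := Finset.card_pos.mpr ⟨y, hyBadH⟩
      omega
    have hKK : G.degree x ≤ NB.card * NW.card + 1 := by
      rw [← hNBWsum]; exact add_le_mul_succ hNBpos hNWpos
    refine ⟨BadH.biUnion F1 ∪ MonoNbr.biUnion F2, ?_, ?_⟩
    · intro e he
      rw [Finset.coe_union, Set.mem_union] at he
      rcases he with he | he
      · rw [Finset.mem_coe, Finset.mem_biUnion] at he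
        obtain ⟨h, hh, hmem⟩ := he
        exact (hF1 h hh).2.1 hmem
      · rw [Finset.mem_coe, Finset.mem_biUnion] at he
        obtain ⟨z, hz, hmem⟩ := he
        exact (hF2 z hz).2.1 hmem
    · rw [Finset.card_union_of_disjoint hdisjT12]
      have htarget : G.minDegree * H.minDegree
          ≤ BadH.card * H.minDegree + MonoNbr.card * (NB.card * NW.card) := by
        have hn : H.minDegree ≤ H.degree y := H.minDegree_le_degree y
        have hm : G.minDegree ≤ G.degree x := G.minDegree_le_degree x
        by_cases hbc : G.minDegree ≤ BadH.card
        · calc G.minDegree * H.minDegree ≤ BadH.card * H.minDegree :=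
              Nat.mul_le_mul_right _ hbc
            _ ≤ _ := Nat.le_add_right _ _
        · push_neg at hbc
          have hb1 : 1 ≤ BadH.card := Finset.card_pos.mpr ⟨y, hyBadH⟩
          have hμ : H.minDegree + 1 ≤ MonoNbr.card + BadH.card := by omega
          have hK : G.minDegree ≤ NB.card * NW.card + 1 := le_trans hm hKK
          zify
          have e1 : ((H.minDegree : ℤ) + 1 - BadH.card) ≤ (MonoNbr.card : ℤ) := by
            push_cast at hμ ⊢; linarith
          have e2 : ((G.minDegree : ℤ) - 1) ≤ ((NB.card * NW.card : ℕ) : ℤ) := by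
            push_cast at hK ⊢; linarith
          have e4 : (1 : ℤ) ≤ (BadH.card : ℤ) := by exact_mod_cast hb1
          have e5 : (BadH.card : ℤ) + 1 ≤ (G.minDegree : ℤ) := by
            have : BadH.card + 1 ≤ G.minDegree := hbc
            exact_mod_cast this
          have e3 : (G.minDegree : ℤ) ≤ (H.minDegree : ℤ) := by exact_mod_cast hdelta
          have f1 : ((H.minDegree : ℤ) + 1 - BadH.card) * ((G.minDegree : ℤ) - 1)
              ≤ (MonoNbr.card : ℤ) * ((NB.card * NW.card : ℕ) : ℤ) := by
            apply mul_le_mul e1 e2 (by linarith) (by linarith)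
          have f2 : (0 : ℤ) ≤ ((BadH.card : ℤ) - 1) * ((H.minDegree : ℤ) - G.minDegree + 1) :=
            mul_nonneg (by linarith) (by linarith)
          push_cast at f1 ⊢
          nlinarith [f1, f2]
      calc G.minDegree * H.minDegree
          ≤ BadH.card * H.minDegree + MonoNbr.card * (NB.card * NW.card) := htarget
        _ ≤ _ := Nat.add_le_add hcard1 hcard2
end
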